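/- Let E be a Banach space, p ≥ 1, u : B₁ → E continuous with finite Hölder seminorm [u]_{1+α} of its gradient (i.e. u ∈ C^{1+α}(B₁;E)), α ∈ (0,1). Then for every ε ∈ (0,1/2): sup_{B₁}‖u‖_E ≤ C ε^{1+α} [Du]_{α;B₁} + C ε^{−n/p} ‖u‖_{L^p(B₁;E)}, where C = C(n,p). (Combination of the Hölder interpolation with the L^p lower-order replacement, Lemma 5.2 case r = 1+α, s = 0.) -/

import Mathlib

open MeasureTheory Metric

set_option maxHeartbeats 1000000 in
/-- Lemma 5.2 with `r = 1 + α`, `s = 0`: for `u ∈ C^{1+α}(B₁; E)` and `ε ∈ (0,1/2)`,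
`sup_{B₁} ‖u‖ ≤ C ε^{1+α} [Du]_{α;B₁} + C ε^{−n/p} ‖u‖_{L^p(B₁;E)}`, `C = C(n,p)`. -/
theorem stmt10 (n : ℕ) (p α : ℝ) (hp : 1 ≤ p) (hα : 0 < α) (hα1 : α < 1) :
    ∃ C : ℝ, 0 < C ∧
      ∀ (E : Type) [inst : NormedAddCommGroup E] [inst2 : NormedSpace ℝ E]
        (u : EuclideanSpace ℝ (Fin n) → E)
        (u' : EuclideanSpace ℝ (Fin n) → EuclideanSpace ℝ (Fin n) →L[ℝ] E)
        (H ε : ℝ),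
        ContinuousOn u (Metric.ball (0 : EuclideanSpace ℝ (Fin n)) 1) →
        (∀ x ∈ Metric.ball (0 : EuclideanSpace ℝ (Fin n)) 1, HasFDerivAt u (u' x) x) →
        0 ≤ H →
        (∀ x ∈ Metric.ball (0 : EuclideanSpace ℝ (Fin n)) 1,
          ∀ y ∈ Metric.ball (0 : EuclideanSpace ℝ (Fin n)) 1,
            ‖u' x - u' y‖ ≤ H * ‖x - y‖ ^ α) →
        0 < ε → ε < 1 / 2 →
        ∀ x ∈ Metric.ball (0 : EuclideanSpace ℝ (Fin n)) 1,
          ‖u x‖ ≤ C * ε ^ (1 + α) * H +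
            C * ε ^ (-(n : ℝ) / p) *
              (∫ z in Metric.ball (0 : EuclideanSpace ℝ (Fin n)) 1, ‖u z‖ ^ p) ^ (1 / p) := by
  have hp0 : (0:ℝ) < p := lt_of_lt_of_le one_pos hp
  have h1α : (0:ℝ) ≤ 1 + α := by linarith
  obtain ⟨ω, hωdef⟩ : ∃ w : ℝ, w = (volume (Metric.ball (0 : EuclideanSpace ℝ (Fin n)) 1)).toReal :=
    ⟨_, rfl⟩
  have hω : 0 < ω := by
    rw [hωdef]
    exact ENNReal.toReal_pos (measure_ball_pos _ _ one_pos).ne' measure_ball_lt_top.ne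
  have hω' : (0:ℝ) < ω ^ (-(1:ℝ)/p) := Real.rpow_pos_of_pos hω _
  have h16n : (0:ℝ) < 16 ^ n := by positivity
  refine ⟨172 + 4 * 16 ^ n * ω ^ (-(1:ℝ)/p), by nlinarith only [hω', h16n, mul_pos h16n hω'], ?_⟩
  intro E _ _ u u' H ε hu hu' hH0 hHol hε hε2 x hx
  set B1 : Set (EuclideanSpace ℝ (Fin n)) := Metric.ball 0 1 with hB1
  have h0B : (0:EuclideanSpace ℝ (Fin n)) ∈ B1 := mem_ball_self one_pos
  -- the small radius r and related quantities
  obtain ⟨r, hrdef⟩ : ∃ t : ℝ, t = min ε (1/32) := ⟨_, rfl⟩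
  have hr0 : 0 < r := hrdef ▸ lt_min hε (by norm_num)
  have hrε : r ≤ ε := hrdef ▸ min_le_left _ _
  have hr32 : r ≤ 1/32 := hrdef ▸ min_le_right _ _
  have hr16 : ε/16 ≤ r := by
    rcases le_total ε (1/32) with h | h
    · rw [hrdef, min_eq_left h]; linarith
    · rw [hrdef, min_eq_right h]; linarith
  obtain ⟨δ, hδdef⟩ : ∃ d : ℝ, d = 16 * r := ⟨_, rfl⟩
  have hδ0 : 0 < δ := by rw [hδdef]; linarith
  have hδhalf : δ ≤ 1/2 := by rw [hδdef]; linarith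
  obtain ⟨ρ, hρdef⟩ : ∃ q : ℝ, q = r ^ (1+α) := ⟨_, rfl⟩
  have hρ0 : (0:ℝ) ≤ ρ := hρdef ▸ Real.rpow_nonneg hr0.le _
  have hρeq : r * r ^ α = ρ := by
    rw [hρdef, Real.rpow_add hr0, Real.rpow_one]
  have hrα0 : (0:ℝ) ≤ r ^ α := Real.rpow_nonneg hr0.le _
  -- powers of constants
  have pow_le : ∀ b : ℝ, 1 ≤ b → b ^ α ≤ b := by
    intro b hb
    calc b ^ α ≤ b ^ (1:ℝ) := Real.rpow_le_rpow_of_exponent_le hb hα1.le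
    _ = b := Real.rpow_one b
  -- the sup of ‖u‖ over the ball
  have hMbdd : BddAbove ((fun y => ‖u y‖) '' B1) := by
    refine ⟨‖u 0‖ + (‖u' 0‖ + H), ?_⟩
    rintro - ⟨y, hy, rfl⟩
    have hbound : ∀ z ∈ B1, ‖u' z‖ ≤ ‖u' 0‖ + H := by
      intro z hz
      have h1 : ‖u' z - u' 0‖ ≤ H * ‖z - 0‖ ^ α := hHol z hz 0 h0B
      have h2 : ‖z - 0‖ ^ α ≤ 1 := by
        refine Real.rpow_le_one (norm_nonneg _) ?_ hα.le
        rw [sub_zero]; exact (mem_ball_zero_iff.mp hz).le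
      have h3 : ‖u' z - u' 0‖ ≤ H := by
        nlinarith only [h1, h2, hH0, mul_nonneg hH0 (sub_nonneg.mpr h2),
          Real.rpow_nonneg (norm_nonneg (z - 0)) α]
      calc ‖u' z‖ = ‖u' 0 + (u' z - u' 0)‖ := by congr 1; abel
      _ ≤ ‖u' 0‖ + ‖u' z - u' 0‖ := norm_add_le _ _
      _ ≤ ‖u' 0‖ + H := by linarith
    have h4 := Convex.norm_image_sub_le_of_norm_hasFDerivWithin_le
      (fun z hz => (hu' z hz).hasFDerivWithinAt) hbound (convex_ball 0 1) h0B hy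
    have h5 : ‖y - 0‖ ≤ 1 := by rw [sub_zero]; exact (mem_ball_zero_iff.mp hy).le
    have h6 : 0 ≤ ‖u' 0‖ + H := add_nonneg (norm_nonneg _) hH0
    calc ‖u y‖ = ‖u 0 + (u y - u 0)‖ := by congr 1; abel
    _ ≤ ‖u 0‖ + ‖u y - u 0‖ := norm_add_le _ _
    _ ≤ ‖u 0‖ + (‖u' 0‖ + H) := by nlinarith only [h4, h5, h6, mul_nonneg h6 (sub_nonneg.mpr h5)]
  obtain ⟨M, hMdef⟩ : ∃ m : ℝ, m = sSup ((fun y => ‖u y‖) '' B1) := ⟨_, rfl⟩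
  have hMx : ∀ y ∈ B1, ‖u y‖ ≤ M := fun y hy => hMdef ▸ le_csSup hMbdd ⟨y, hy, rfl⟩
  have hM0 : 0 ≤ M := le_trans (norm_nonneg _) (hMx 0 h0B)
  -- the integral
  obtain ⟨I, hIdef⟩ : ∃ i : ℝ, i = ∫ z in B1, ‖u z‖ ^ p := ⟨_, rfl⟩
  obtain ⟨J, hJdef⟩ : ∃ j : ℝ, j = I ^ (1/p) := ⟨_, rfl⟩
  have hI0 : 0 ≤ I := hIdef ▸
    setIntegral_nonneg measurableSet_ball (fun z _ => Real.rpow_nonneg (norm_nonneg _) _)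
  have hJ0 : 0 ≤ J := hJdef ▸ Real.rpow_nonneg hI0 _
  have hrpcont : ContinuousOn (fun z => ‖u z‖ ^ p) B1 :=
    hu.norm.rpow_const (fun z _ => Or.inr hp0.le)
  haveI hfin : IsFiniteMeasure (volume.restrict B1) :=
    ⟨by rw [Measure.restrict_apply_univ]; exact measure_ball_lt_top⟩
  have hI_int : IntegrableOn (fun z => ‖u z‖ ^ p) B1 := by
    refine Integrable.mono' (integrable_const (M ^ p))
      (hrpcont.aestronglyMeasurable measurableSet_ball) ?_
    filter_upwards [ae_restrict_mem measurableSet_ball] with z hz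
    rw [Real.norm_eq_abs, abs_of_nonneg (Real.rpow_nonneg (norm_nonneg _) _)]
    exact Real.rpow_le_rpow (norm_nonneg _) (hMx z hz) hp0.le
  obtain ⟨P, hPdef⟩ : ∃ q : ℝ, q = 2 * ω ^ (-(1:ℝ)/p) * r ^ (-(n:ℝ)/p) * J := ⟨_, rfl⟩
  have hrn : (0:ℝ) < r ^ (-(n:ℝ)/p) := Real.rpow_pos_of_pos hr0 _
  have hP0 : 0 ≤ P := by
    rw [hPdef]; positivity
  obtain ⟨A, hAdef⟩ : ∃ a : ℝ, a = 86 * H * ρ + P := ⟨_, rfl⟩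
  have hA0 : 0 ≤ A := by
    have : 0 ≤ 86 * H * ρ := by positivity
    rw [hAdef]; linarith
  -- main pointwise estimate
  have key : ∀ w ∈ B1, ‖u w‖ ≤ M/4 + A := by
    intro w hw
    have hw1 : ‖w‖ < 1 := mem_ball_zero_iff.mp hw
    obtain ⟨c, hcdef⟩ : ∃ c : EuclideanSpace ℝ (Fin n), c = (1 - 2*r) • w := ⟨_, rfl⟩
    have h2r : (0:ℝ) ≤ 1 - 2*r := by linarith
    have hnc : ‖c‖ ≤ (1 - 2*r) * ‖w‖ := by
      rw [hcdef, norm_smul, Real.norm_eq_abs, abs_of_nonneg h2r]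
    have hprod : 0 ≤ (1 - 2*r) * (1 - ‖w‖) := mul_nonneg h2r (by linarith)
    have hcB : c ∈ B1 := by
      rw [mem_ball_zero_iff]
      nlinarith only [hnc, hprod, hw1, hr0, norm_nonneg w]
    have hcw : c - w = (-(2*r)) • w := by rw [hcdef]; module
    have hcwn : ‖c - w‖ ≤ 2*r := by
      rw [hcw, norm_smul, Real.norm_eq_abs, abs_neg,
        abs_of_nonneg (by linarith : (0:ℝ) ≤ 2*r)]
      nlinarith only [mul_nonneg hr0.le (sub_nonneg.mpr hw1.le)]
    have hsub : ∀ z : EuclideanSpace ℝ (Fin n), ‖z‖ ≤ r → c + z ∈ B1 ∧ c - z ∈ B1 := by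
      intro z hz
      constructor
      · rw [mem_ball_zero_iff]
        calc ‖c + z‖ ≤ ‖c‖ + ‖z‖ := norm_add_le _ _
        _ < 1 := by nlinarith only [hnc, hz, hprod, hr0]
      · rw [mem_ball_zero_iff]
        calc ‖c - z‖ ≤ ‖c‖ + ‖z‖ := norm_sub_le _ _
        _ < 1 := by nlinarith only [hnc, hz, hprod, hr0]
    -- minimizing point of the symmetrized p-th power over the small closed ball
    have hmaps1 : Set.MapsTo (fun z : EuclideanSpace ℝ (Fin n) => c + z)
        (closedBall 0 r) B1 := fun z hz => (hsub z (mem_closedBall_zero_iff.mp hz)).1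
    have hmaps2 : Set.MapsTo (fun z : EuclideanSpace ℝ (Fin n) => c - z)
        (closedBall 0 r) B1 := fun z hz => (hsub z (mem_closedBall_zero_iff.mp hz)).2
    have hcont1 : ContinuousOn (fun z : EuclideanSpace ℝ (Fin n) => ‖u (c + z)‖ ^ p)
        (closedBall 0 r) := by
      have h := hu.comp ((continuous_const.add continuous_id).continuousOn
        (s := closedBall (0 : EuclideanSpace ℝ (Fin n)) r)) hmaps1
      exact h.norm.rpow_const (fun z _ => Or.inr hp0.le)
    have hcont2 : ContinuousOn (fun z : EuclideanSpace ℝ (Fin n) => ‖u (c - z)‖ ^ p)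
        (closedBall 0 r) := by
      have h := hu.comp ((continuous_const.sub continuous_id).continuousOn
        (s := closedBall (0 : EuclideanSpace ℝ (Fin n)) r)) hmaps2
      exact h.norm.rpow_const (fun z _ => Or.inr hp0.le)
    obtain ⟨z₀, hz₀c, hz₀min⟩ :=
      (isCompact_closedBall (0:EuclideanSpace ℝ (Fin n)) r).exists_isMinOn
        (Set.nonempty_of_mem (mem_closedBall_self hr0.le)) (hcont1.add hcont2)
    have hz₀r : ‖z₀‖ ≤ r := mem_closedBall_zero_iff.mp hz₀c
    have hint1 : IntegrableOn (fun z : EuclideanSpace ℝ (Fin n) => ‖u (c + z)‖ ^ p) (ball 0 r) :=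
      (hcont1.integrableOn_compact (isCompact_closedBall _ _)).mono_set ball_subset_closedBall
    have hint2 : IntegrableOn (fun z : EuclideanSpace ℝ (Fin n) => ‖u (c - z)‖ ^ p) (ball 0 r) :=
      (hcont2.integrableOn_compact (isCompact_closedBall _ _)).mono_set ball_subset_closedBall
    obtain ⟨V, hVdef⟩ : ∃ v : ℝ, v = (volume (ball (0:EuclideanSpace ℝ (Fin n)) r)).toReal :=
      ⟨_, rfl⟩
    have hVeq : V = r^n * ω := by
      rw [hVdef, Measure.addHaar_ball_of_pos (volume : Measure (EuclideanSpace ℝ (Fin n))) _ hr0,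
        finrank_euclideanSpace_fin, ENNReal.toReal_mul, ENNReal.toReal_ofReal (by positivity),
        hωdef, hB1]
    have hV0 : 0 < V := by rw [hVeq]; exact mul_pos (by positivity) hω
    have hmin : (‖u (c + z₀)‖ ^ p + ‖u (c - z₀)‖ ^ p) * V ≤
        ∫ z in ball (0:EuclideanSpace ℝ (Fin n)) r, (‖u (c + z)‖ ^ p + ‖u (c - z)‖ ^ p) := by
      rw [hVdef, mul_comm (‖u (c + z₀)‖ ^ p + ‖u (c - z₀)‖ ^ p)]
      exact setIntegral_ge_of_const_le measurableSet_ball measure_ball_lt_top.ne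
        (fun z hz => hz₀min (ball_subset_closedBall hz)) (hint1.add hint2)
    have htrans1 : (∫ z in ball (0:EuclideanSpace ℝ (Fin n)) r, ‖u (c + z)‖ ^ p)
        = ∫ y in ball c r, ‖u y‖ ^ p := by
      have hpre : (fun z : EuclideanSpace ℝ (Fin n) => c + z) ⁻¹' (ball c r) = ball 0 r := by
        ext z
        simp [Metric.mem_ball, dist_eq_norm, add_sub_cancel_left]
      have h := (measurePreserving_add_left (volume : Measure (EuclideanSpace ℝ (Fin n)))
        c).setIntegral_preimage_emb
        ((MeasurableEquiv.addLeft c).measurableEmbedding) (fun y => ‖u y‖ ^ p) (ball c r)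
      rw [hpre] at h
      exact h
    have htrans2 : (∫ z in ball (0:EuclideanSpace ℝ (Fin n)) r, ‖u (c - z)‖ ^ p)
        = ∫ y in ball c r, ‖u y‖ ^ p := by
      have hpre : (fun z : EuclideanSpace ℝ (Fin n) => c - z) ⁻¹' (ball c r) = ball 0 r := by
        ext z
        simp [Metric.mem_ball, dist_eq_norm, sub_sub_cancel_left]
      have h := (Measure.measurePreserving_sub_left (volume : Measure (EuclideanSpace ℝ (Fin n)))
        c).setIntegral_preimage_emb
        ((MeasurableEquiv.subLeft c).measurableEmbedding) (fun y => ‖u y‖ ^ p) (ball c r)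
      rw [hpre] at h
      exact h
    have hballsub : ball c r ⊆ B1 := by
      intro y hy
      rw [mem_ball] at hy ⊢
      have h1 := dist_triangle y c 0
      have h2 : dist c 0 = ‖c‖ := dist_zero_right c
      nlinarith only [h1, hy, h2, hnc, hprod, hr0]
    have hmono : (∫ y in ball c r, ‖u y‖ ^ p) ≤ I := by
      rw [hIdef]
      exact setIntegral_mono_set hI_int
        (Filter.Eventually.of_forall (fun y => Real.rpow_nonneg (norm_nonneg _) _))
        (HasSubset.Subset.eventuallyLE hballsub)
    have hQ : ‖u (c + z₀)‖ ^ p + ‖u (c - z₀)‖ ^ p ≤ 2 * I / V := by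
      rw [le_div_iff₀ hV0]
      have hadd : (∫ z in ball (0:EuclideanSpace ℝ (Fin n)) r,
            (‖u (c + z)‖ ^ p + ‖u (c - z)‖ ^ p))
          = (∫ z in ball (0:EuclideanSpace ℝ (Fin n)) r, ‖u (c + z)‖ ^ p)
            + ∫ z in ball (0:EuclideanSpace ℝ (Fin n)) r, ‖u (c - z)‖ ^ p :=
        integral_add hint1 hint2
      rw [hadd, htrans1, htrans2] at hmin
      linarith only [hmin, hmono]
    have hpow_extract : ∀ a : ℝ, 0 ≤ a → a ^ p ≤ 2*I/V → a ≤ (2*I/V) ^ (1/p) := by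
      intro a ha hle
      have h2 := Real.rpow_le_rpow (Real.rpow_nonneg ha _) hle
        (by positivity : (0:ℝ) ≤ 1/p)
      rwa [← Real.rpow_mul ha, mul_one_div_cancel hp0.ne', Real.rpow_one] at h2
    have hplus : ‖u (c + z₀)‖ ≤ (2*I/V) ^ (1/p) :=
      hpow_extract _ (norm_nonneg _)
        (le_trans (le_add_of_nonneg_right (Real.rpow_nonneg (norm_nonneg _) _)) hQ)
    have hminus : ‖u (c - z₀)‖ ≤ (2*I/V) ^ (1/p) :=
      hpow_extract _ (norm_nonneg _)
        (le_trans (le_add_of_nonneg_left (Real.rpow_nonneg (norm_nonneg _) _)) hQ)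
    have hDP : (2*I/V) ^ (1/p) ≤ P := by
      have e0 : (0:ℝ) ≤ 2*I := by linarith
      have e1 : (2*I/V) ^ (1/p) = (2:ℝ)^(1/p) * I^(1/p) * (V^(1/p))⁻¹ := by
        rw [div_eq_mul_inv, Real.mul_rpow e0 (inv_nonneg.mpr hV0.le),
          Real.mul_rpow (by norm_num) hI0, Real.inv_rpow hV0.le]
      have e2 : V ^ (1/p) = r ^ ((n:ℝ)/p) * ω ^ ((1:ℝ)/p) := by
        rw [hVeq, Real.mul_rpow (by positivity) hω.le, ← Real.rpow_natCast r n,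
          ← Real.rpow_mul hr0.le, mul_one_div]
      have e3 : (r ^ ((n:ℝ)/p))⁻¹ = r ^ (-(n:ℝ)/p) := by
        rw [show -(n:ℝ)/p = -((n:ℝ)/p) by ring, Real.rpow_neg hr0.le]
      have e4 : (ω ^ ((1:ℝ)/p))⁻¹ = ω ^ (-(1:ℝ)/p) := by
        rw [show -(1:ℝ)/p = -((1:ℝ)/p) by ring, Real.rpow_neg hω.le]
      have e5 : (2:ℝ)^(1/p) ≤ 2 := by
        calc (2:ℝ)^(1/p) ≤ (2:ℝ)^(1:ℝ) :=
          Real.rpow_le_rpow_of_exponent_le one_le_two (by rw [div_le_one hp0]; exact hp)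
        _ = 2 := Real.rpow_one 2
      have e6 : 0 ≤ J * (r ^ (-(n:ℝ)/p) * ω ^ (-(1:ℝ)/p)) :=
        mul_nonneg hJ0 (mul_nonneg hrn.le hω'.le)
      calc (2*I/V) ^ (1/p)
          = (2:ℝ)^(1/p) * (J * ((r ^ ((n:ℝ)/p))⁻¹ * (ω ^ ((1:ℝ)/p))⁻¹)) := by
            rw [e1, e2, hJdef, mul_inv]; ring
      _ = (2:ℝ)^(1/p) * (J * (r ^ (-(n:ℝ)/p) * ω ^ (-(1:ℝ)/p))) := by rw [e3, e4]
      _ ≤ 2 * (J * (r ^ (-(n:ℝ)/p) * ω ^ (-(1:ℝ)/p))) := by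
            have e7 : (0:ℝ) ≤ (2:ℝ)^(1/p) := Real.rpow_nonneg (by norm_num) _
            nlinarith only [e5, e6, e7]
      _ = P := by rw [hPdef]; ring
    -- Taylor expansion bounds around w
    have hwc : ‖w - c‖ ≤ 2*r := by rw [norm_sub_rev]; exact hcwn
    have hs1conv : Convex ℝ (B1 ∩ ball c (3*r)) := (convex_ball _ _).inter (convex_ball _ _)
    have hws1 : w ∈ B1 ∩ ball c (3*r) :=
      ⟨hw, by rw [mem_ball_iff_norm]; linarith only [hwc, hr0]⟩
    have hp1 : c + z₀ ∈ B1 ∩ ball c (3*r) := ⟨(hsub z₀ hz₀r).1, by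
      rw [mem_ball_iff_norm, add_sub_cancel_left]; linarith only [hz₀r, hr0]⟩
    have hp2 : c - z₀ ∈ B1 ∩ ball c (3*r) := ⟨(hsub z₀ hz₀r).2, by
      rw [mem_ball_iff_norm, sub_sub_cancel_left, norm_neg]; linarith only [hz₀r, hr0]⟩
    have hbd1 : ∀ z ∈ B1 ∩ ball c (3*r), ‖u' z - u' w‖ ≤ H * (5*r) ^ α := by
      intro z hz
      refine (hHol z hz.1 w hw).trans ?_
      have h1 : ‖z - w‖ ≤ 5*r := by
        have h2 : ‖z - c‖ < 3*r := mem_ball_iff_norm.mp hz.2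
        calc ‖z - w‖ = dist z w := (dist_eq_norm _ _).symm
        _ ≤ dist z c + dist c w := dist_triangle _ _ _
        _ = ‖z - c‖ + ‖c - w‖ := by rw [dist_eq_norm, dist_eq_norm]
        _ ≤ 5*r := by linarith only [h2, hcwn]
      exact mul_le_mul_of_nonneg_left (Real.rpow_le_rpow (norm_nonneg _) h1 hα.le) hH0
    have hT1 := hs1conv.norm_image_sub_le_of_norm_hasFDerivWithin_le'
      (fun z hz => (hu' z hz.1).hasFDerivWithinAt) hbd1 hws1 hp1
    have hT2 := hs1conv.norm_image_sub_le_of_norm_hasFDerivWithin_le'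
      (fun z hz => (hu' z hz.1).hasFDerivWithinAt) hbd1 hws1 hp2
    have h5α : ((5:ℝ))^α ≤ 5 := pow_le 5 (by norm_num)
    have h5r : ((5:ℝ)*r)^α = 5^α * r^α := Real.mul_rpow (by norm_num) hr0.le
    have hyw1 : ‖c + z₀ - w‖ ≤ 3*r := by
      calc ‖c + z₀ - w‖ = ‖(c - w) + z₀‖ := by congr 1; abel
      _ ≤ ‖c - w‖ + ‖z₀‖ := norm_add_le _ _
      _ ≤ 3*r := by linarith only [hcwn, hz₀r]
    have hyw2 : ‖c - z₀ - w‖ ≤ 3*r := by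
      calc ‖c - z₀ - w‖ = ‖(c - w) - z₀‖ := by congr 1; abel
      _ ≤ ‖c - w‖ + ‖z₀‖ := norm_sub_le _ _
      _ ≤ 3*r := by linarith only [hcwn, hz₀r]
    have hRbound : ∀ v : EuclideanSpace ℝ (Fin n), ‖v - w‖ ≤ 3*r →
        H * (5*r)^α * ‖v - w‖ ≤ 15 * H * ρ := by
      intro v hv
      have h0 : 0 ≤ H * (5*r)^α := mul_nonneg hH0 (Real.rpow_nonneg (by positivity) _)
      calc H * (5*r)^α * ‖v - w‖ ≤ H * (5*r)^α * (3*r) := mul_le_mul_of_nonneg_left hv h0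
      _ = 3 * (5:ℝ)^α * (H * (r * r^α)) := by rw [h5r]; ring
      _ = 3 * (5:ℝ)^α * (H * ρ) := by rw [hρeq]
      _ ≤ 15 * H * ρ := by nlinarith only [h5α, mul_nonneg hH0 hρ0]
    have ht1 : ‖u (c+z₀) - u w - (u' w) (c+z₀-w)‖ ≤ 15*H*ρ := hT1.trans (hRbound _ hyw1)
    have ht2 : ‖u (c-z₀) - u w - (u' w) (c-z₀-w)‖ ≤ 15*H*ρ := hT2.trans (hRbound _ hyw2)
    have hlin : (u' w) (c + z₀ - w) + (u' w) (c - z₀ - w) = (2:ℝ) • (u' w) (c - w) := by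
      rw [← _root_.map_smul, ← _root_.map_add]
      congr 1
      module
    have hid : (2:ℝ) • u w = (u (c+z₀) + u (c-z₀)) - (2:ℝ) • ((u' w) (c - w))
        - ((u (c+z₀) - u w - (u' w) (c+z₀-w)) + (u (c-z₀) - u w - (u' w) (c-z₀-w))) := by
      rw [← hlin]; module
    -- the gradient term
    have hgrad : ‖(u' w) (c - w)‖ ≤ M/4 + 68*H*ρ := by
      have hHρ : 0 ≤ H * ρ := mul_nonneg hH0 hρ0
      rcases eq_or_ne w 0 with rfl | hw0
      · have hc0 : c = 0 := by rw [hcdef, smul_zero]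
        rw [hc0]
        simp only [sub_zero, map_zero, norm_zero]
        linarith only [hM0, hHρ]
      · have hw0' : 0 < ‖w‖ := norm_pos_iff.mpr hw0
        obtain ⟨y, hydef⟩ : ∃ v : EuclideanSpace ℝ (Fin n), v = c - (δ/‖w‖) • w := ⟨_, rfl⟩
        have hyc : y - c = (-(δ/‖w‖)) • w := by rw [hydef]; module
        have hδw : 0 ≤ δ/‖w‖ := div_nonneg hδ0.le (norm_nonneg _)
        have hycn : ‖y - c‖ = δ := by
          rw [hyc, norm_smul, Real.norm_eq_abs, abs_neg, abs_of_nonneg hδw]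
          field_simp
        have hyw : y = ((1 - 2*r) - δ/‖w‖) • w := by rw [hydef, hcdef]; module
        have hyB : y ∈ B1 := by
          rw [mem_ball_zero_iff, hyw, norm_smul, Real.norm_eq_abs]
          rcases le_or_gt 0 ((1 - 2*r) - δ/‖w‖) with ht | ht
          · rw [abs_of_nonneg ht]
            nlinarith only [mul_nonneg ht (by linarith : (0:ℝ) ≤ 1 - ‖w‖), hδw, hr0, ht]
          · rw [abs_of_neg ht]
            have hdw : δ/‖w‖ * ‖w‖ = δ := div_mul_cancel₀ _ hw0'.ne'
            nlinarith only [hδhalf, mul_nonneg h2r (norm_nonneg w), hdw]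
        have hs2conv : Convex ℝ (B1 ∩ ball c (2*δ)) := (convex_ball _ _).inter (convex_ball _ _)
        have hcs2 : c ∈ B1 ∩ ball c (2*δ) := ⟨hcB, mem_ball_self (by linarith only [hδ0])⟩
        have hys2 : y ∈ B1 ∩ ball c (2*δ) := ⟨hyB, by rw [mem_ball_iff_norm, hycn]; linarith only [hδ0]⟩
        have hbd2 : ∀ z ∈ B1 ∩ ball c (2*δ), ‖u' z - u' c‖ ≤ H * (2*δ)^α := by
          intro z hz
          exact (hHol z hz.1 c hcB).trans (mul_le_mul_of_nonneg_left
            (Real.rpow_le_rpow (norm_nonneg _) (mem_ball_iff_norm.mp hz.2).le hα.le) hH0)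
        have hT3 := hs2conv.norm_image_sub_le_of_norm_hasFDerivWithin_le'
          (fun z hz => (hu' z hz.1).hasFDerivWithinAt) hbd2 hcs2 hys2
        have hucy : (u' c) (y - c) = (-(δ/‖w‖)) • (u' c) w := by rw [hyc, _root_.map_smul]
        have huyc : ‖(u' c) (y - c)‖ = (δ/‖w‖) * ‖(u' c) w‖ := by
          rw [hucy, norm_smul, Real.norm_eq_abs, abs_neg, abs_of_nonneg hδw]
        have hsplit3 : (u' c) (y - c) = (u y - u c) - (u y - u c - (u' c) (y - c)) := by abel
        have h3b : ‖(u' c) (y - c)‖ ≤ 2*M + H*(2*δ)^α*δ := by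
          have hMy := hMx y hyB
          have hMc := hMx c hcB
          calc ‖(u' c) (y - c)‖
              = ‖(u y - u c) - (u y - u c - (u' c) (y - c))‖ := congrArg norm hsplit3
          _ ≤ ‖u y - u c‖ + ‖u y - u c - (u' c) (y - c)‖ := norm_sub_le _ _
          _ ≤ (‖u y‖ + ‖u c‖) + H*(2*δ)^α*‖y - c‖ := add_le_add (norm_sub_le _ _) hT3
          _ ≤ 2*M + H*(2*δ)^α*δ := by rw [hycn]; linarith only [hMy, hMc]
        have hwnorm : ‖(u' c) w‖ * (δ/‖w‖) ≤ 2*M + H*(2*δ)^α*δ := by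
          rw [mul_comm, ← huyc]; exact h3b
        have hucww : ‖(u' c) w‖ ≤ (2*M + H*(2*δ)^α*δ)/δ * ‖w‖ := by
          rw [div_mul_eq_mul_div, le_div_iff₀ hδ0]
          have h7 := mul_le_mul_of_nonneg_right hwnorm (norm_nonneg w)
          have h8 : ‖(u' c) w‖ * (δ/‖w‖) * ‖w‖ = ‖(u' c) w‖ * δ := by
            field_simp
          rw [← h8]; exact h7
        have h2δnn : (0:ℝ) ≤ H*(2*δ)^α := mul_nonneg hH0 (Real.rpow_nonneg (by linarith) _)
        have h4 : ‖(u' c) (c - w)‖ = 2*r * ‖(u' c) w‖ := by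
          rw [hcw, _root_.map_smul, norm_smul, Real.norm_eq_abs, abs_neg,
            abs_of_nonneg (by linarith : (0:ℝ) ≤ 2*r)]
        have h2δα : ((2:ℝ)*δ)^α ≤ 32 * r^α := by
          have h32 : (2:ℝ)*δ = 32*r := by rw [hδdef]; ring
          rw [h32, Real.mul_rpow (by norm_num) hr0.le]
          nlinarith only [pow_le 32 (by norm_num), hrα0]
        have hfin : 2*r * ‖(u' c) w‖ ≤ M/4 + 64*H*ρ := by
          have h5 := mul_le_mul_of_nonneg_left hucww (by linarith : (0:ℝ) ≤ 2*r)
          have hq0 : (0:ℝ) ≤ (2*M + H*(2*δ)^α*δ)/δ := by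
            apply div_nonneg ?_ hδ0.le
            linarith only [mul_nonneg h2δnn hδ0.le, hM0]
          have h6 : 2*r * ((2*M + H*(2*δ)^α*δ)/δ * ‖w‖) ≤ 2*r * ((2*M + H*(2*δ)^α*δ)/δ) := by
            apply mul_le_mul_of_nonneg_left ?_ (by linarith : (0:ℝ) ≤ 2*r)
            exact mul_le_of_le_one_right hq0 hw1.le
          have h7 : 2*r * ((2*M + H*(2*δ)^α*δ)/δ) = (2*M + H*(2*δ)^α*δ)/8 := by
            rw [hδdef]
            field_simp
            ring
          have h9 : H*(2*δ)^α*δ ≤ H*(32*r^α)*(16*r) := by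
            have h9a := mul_le_mul_of_nonneg_right (mul_le_mul_of_nonneg_left h2δα hH0) hδ0.le
            rw [← hδdef]
            exact h9a
          have h10 : H*(32*r^α)*(16*r) = 512*(H*ρ) := by
            rw [← hρeq]; ring
          linarith only [h5, h6, h7, h9, h10, hHρ]
        have hdiff : ‖((u' w) - (u' c)) (c - w)‖ ≤ 4*H*ρ := by
          have hop : ‖(u' w) - (u' c)‖ ≤ H * (2*r)^α := by
            refine (hHol w hw c hcB).trans ?_
            exact mul_le_mul_of_nonneg_left
              (Real.rpow_le_rpow (norm_nonneg _) hwc hα.le) hH0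
          have h2rα : ((2:ℝ)*r)^α ≤ 2*r^α := by
            rw [Real.mul_rpow (by norm_num) hr0.le]
            nlinarith only [pow_le 2 one_le_two, hrα0]
          calc ‖((u' w) - (u' c)) (c - w)‖ ≤ ‖(u' w) - (u' c)‖ * ‖c - w‖ :=
            ContinuousLinearMap.le_opNorm _ _
          _ ≤ (H * (2*r)^α) * (2*r) := by
              apply mul_le_mul hop hcwn (norm_nonneg _)
                (mul_nonneg hH0 (Real.rpow_nonneg (by linarith) _))
          _ ≤ 4*H*ρ := by
              have hρH : H*(r*r^α) = H*ρ := by rw [hρeq]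
              nlinarith only [mul_le_mul_of_nonneg_right (mul_le_mul_of_nonneg_left h2rα hH0)
                (show (0:ℝ) ≤ 2*r by linarith only [hr0]), hρH]
        have hsplit : (u' w) (c - w) = ((u' w) - (u' c)) (c - w) + (u' c) (c - w) := by
          simp [ContinuousLinearMap.sub_apply]
        calc ‖(u' w) (c - w)‖
            = ‖((u' w) - (u' c)) (c - w) + (u' c) (c - w)‖ := congrArg norm hsplit
        _ ≤ ‖((u' w) - (u' c)) (c - w)‖ + ‖(u' c) (c - w)‖ := norm_add_le _ _
        _ ≤ 4*H*ρ + (M/4 + 64*H*ρ) := add_le_add hdiff (by rw [h4]; exact hfin)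
        _ = M/4 + 68*H*ρ := by ring
    -- assemble
    have e1 : (2:ℝ) * ‖u w‖ = ‖(2:ℝ) • u w‖ := by rw [norm_smul]; simp
    have hnorm1 : (2:ℝ) * ‖u w‖ ≤ ‖u (c+z₀)‖ + ‖u (c-z₀)‖ + 2*‖(u' w) (c - w)‖
        + (15*H*ρ + 15*H*ρ) := by
      rw [e1, hid]
      refine le_trans (norm_sub_le _ _) ?_
      refine le_trans (add_le_add_left (norm_sub_le _ _) _) ?_
      have hA' : ‖u (c+z₀) + u (c-z₀)‖ ≤ ‖u (c+z₀)‖ + ‖u (c-z₀)‖ := norm_add_le _ _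
      have hB' : ‖(2:ℝ) • ((u' w) (c - w))‖ = 2*‖(u' w) (c - w)‖ := by rw [norm_smul]; simp
      have hC' : ‖(u (c+z₀) - u w - (u' w) (c+z₀-w)) + (u (c-z₀) - u w - (u' w) (c-z₀-w))‖
          ≤ 15*H*ρ + 15*H*ρ := le_trans (norm_add_le _ _) (by linarith only [ht1, ht2])
      linarith only [hA', hB', hC']
    have hHρ : 0 ≤ H * ρ := mul_nonneg hH0 hρ0
    calc ‖u w‖ ≤ (‖u (c+z₀)‖ + ‖u (c-z₀)‖)/2 + ‖(u' w) (c - w)‖ + 15*H*ρ := by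
          linarith only [hnorm1]
    _ ≤ ((2*I/V) ^ (1/p) + (2*I/V) ^ (1/p))/2 + (M/4 + 68*H*ρ) + 15*H*ρ := by
          linarith only [hplus, hminus, hgrad]
    _ ≤ P + (M/4 + 68*H*ρ) + 15*H*ρ := by linarith only [hDP]
    _ ≤ M/4 + A := by rw [hAdef]; linarith only [hHρ]

  -- absorption
  have hMle : M ≤ M/4 + A := by
    nth_rewrite 1 [hMdef]
    exact Real.sSup_le (by rintro v ⟨y, hy, rfl⟩; exact key y hy)
      (by linarith only [hM0, hA0])
  have hM2A : M ≤ 2*A := by linarith only [hMle, hA0]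
  -- final numeric comparison
  have hεα : ρ ≤ ε ^ (1+α) := hρdef ▸ Real.rpow_le_rpow hr0.le hrε h1α
  have hεα0 : 0 ≤ ε ^ (1+α) := Real.rpow_nonneg hε.le _
  have hεn : (0:ℝ) < ε ^ (-(n:ℝ)/p) := Real.rpow_pos_of_pos hε _
  have h1 : 172*H*ρ ≤ (172 + 4 * 16 ^ n * ω ^ (-(1:ℝ)/p)) * ε ^ (1+α) * H := by
    have a1 : 172*H*ρ ≤ 172*H*(ε ^ (1+α)) := by
      nlinarith only [mul_nonneg hH0 (sub_nonneg.mpr hεα)]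
    have a2 : 0 ≤ 4 * 16 ^ n * ω ^ (-(1:ℝ)/p) * (ε ^ (1+α)) * H :=
      mul_nonneg (mul_nonneg (mul_nonneg (by positivity) hω'.le) hεα0) hH0
    have a3 : (172 + 4 * 16 ^ n * ω ^ (-(1:ℝ)/p)) * ε ^ (1+α) * H
        = 172*H*(ε ^ (1+α)) + 4 * 16 ^ n * ω ^ (-(1:ℝ)/p) * (ε ^ (1+α)) * H := by ring
    linarith only [a1, a2, a3]
  have hrpow : r ^ (-(n:ℝ)/p) ≤ ε ^ (-(n:ℝ)/p) * 16 ^ n := by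
    have hnp0 : -(n:ℝ)/p ≤ 0 :=
      div_nonpos_of_nonpos_of_nonneg (neg_nonpos.mpr (Nat.cast_nonneg n)) hp0.le
    have ha : r ^ (-(n:ℝ)/p) ≤ (ε/16) ^ (-(n:ℝ)/p) :=
      Real.rpow_le_rpow_of_nonpos (by positivity) hr16 hnp0
    have hb : (ε/16 : ℝ) ^ (-(n:ℝ)/p) = ε ^ (-(n:ℝ)/p) / (16:ℝ) ^ (-(n:ℝ)/p) :=
      Real.div_rpow hε.le (by norm_num : (0:ℝ) ≤ 16) _
    have hc : ((16:ℝ) ^ (-(n:ℝ)/p))⁻¹ = (16:ℝ) ^ ((n:ℝ)/p) := by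
      rw [show -(n:ℝ)/p = -((n:ℝ)/p) by ring, Real.rpow_neg (by norm_num), inv_inv]
    have hd : (16:ℝ) ^ ((n:ℝ)/p) ≤ (16:ℝ) ^ ((n:ℝ)) :=
      Real.rpow_le_rpow_of_exponent_le (by norm_num) (div_le_self (Nat.cast_nonneg n) hp)
    have he : (16:ℝ) ^ ((n:ℝ)) = 16 ^ n := Real.rpow_natCast 16 n
    calc r ^ (-(n:ℝ)/p) ≤ (ε/16) ^ (-(n:ℝ)/p) := ha
    _ = ε ^ (-(n:ℝ)/p) * ((16:ℝ) ^ (-(n:ℝ)/p))⁻¹ := by rw [hb, div_eq_mul_inv]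
    _ = ε ^ (-(n:ℝ)/p) * (16:ℝ) ^ ((n:ℝ)/p) := by rw [hc]
    _ ≤ ε ^ (-(n:ℝ)/p) * (16:ℝ) ^ ((n:ℝ)) := mul_le_mul_of_nonneg_left hd hεn.le
    _ = ε ^ (-(n:ℝ)/p) * 16 ^ n := by rw [he]
  have h2 : 2*P ≤ (172 + 4 * 16 ^ n * ω ^ (-(1:ℝ)/p)) * ε ^ (-(n:ℝ)/p) * J := by
    rw [hPdef]
    have b1 : 0 ≤ ω ^ (-(1:ℝ)/p) * J * (ε ^ (-(n:ℝ)/p) * 16 ^ n - r ^ (-(n:ℝ)/p)) :=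
      mul_nonneg (mul_nonneg hω'.le hJ0) (sub_nonneg.mpr hrpow)
    have b2 : 0 ≤ ε ^ (-(n:ℝ)/p) * J := mul_nonneg hεn.le hJ0
    nlinarith only [b1, b2]
  rw [← hIdef, ← hJdef]
  calc ‖u x‖ ≤ M := hMx x hx
  _ ≤ 2*A := hM2A
  _ = 172*H*ρ + 2*P := by rw [hAdef]; ring
  _ ≤ (172 + 4 * 16 ^ n * ω ^ (-(1:ℝ)/p)) * ε ^ (1+α) * H +
      (172 + 4 * 16 ^ n * ω ^ (-(1:ℝ)/p)) * ε ^ (-(n:ℝ)/p) * J := by linarith only [h1, h2]
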